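/- Conversely, the CHK tree key-management covers all future epochs: for any leaf i of a complete binary tree of depth d and any leaf j ≥ i, the set consisting of leaf i together with all existing right siblings of nodes on the path from leaf i to the root contains exactly one node whose encoding is a prefix of the d-bit encoding of j. -/

import Mathlib

/-- The `d`-bit binary encoding (most significant bit first) of the index of a
leaf of the complete binary tree of depth `d`; nodes of the tree are binary
strings (`List Bool`) of length ≤ `d`, the root being the empty string. -/
def leafEnc (d i : ℕ) : List Bool := (List.range d).map fun j => i.testBit (d - 1 - j)

/-- The set of nodes consisting of leaf `i` together with all existing right
siblings of nodes on the path from leaf `i` to the root: a node `w' ++ [false]`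
on the path has right sibling `w' ++ [true]`. -/
def coverSet (d i : ℕ) : Set (List Bool) :=
  {leafEnc d i} ∪
    {w | ∃ w' : List Bool, (w' ++ [false]) <+: leafEnc d i ∧ w = w' ++ [true]}

lemma mem_coverSet {d i : ℕ} {w : List Bool} :
    w ∈ coverSet d i ↔
      w = leafEnc d i ∨ ∃ w' : List Bool, (w' ++ [false]) <+: leafEnc d i ∧ w = w' ++ [true] := by
  simp [coverSet, Set.mem_union, Set.mem_setOf_eq]

lemma leafEnc_succ (d i : ℕ) : leafEnc (d + 1) i = i.testBit d :: leafEnc d i := by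
  simp only [leafEnc, List.range_succ_eq_map, List.map_cons, List.map_map]
  congr 1
  apply List.map_congr_left
  intro j _
  simp only [Function.comp_apply]
  congr 1
  omega

lemma leafEnc_eq_of_mod (d i : ℕ) : leafEnc d (i % 2 ^ d) = leafEnc d i := by
  apply List.map_congr_left
  intro j hj
  rw [List.mem_range] at hj
  rw [Nat.testBit_mod_two_pow]
  have : d - 1 - j < d := by omega
  simp [this]

lemma testBit_iff_of_lt {d n : ℕ} (h : n < 2 ^ (d + 1)) :
    n.testBit d = true ↔ 2 ^ d ≤ n := by
  have h2 : 2 ^ (d + 1) = 2 ^ d * 2 := by rw [pow_succ]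
  have pos : 0 < 2 ^ d := Nat.pow_pos (by norm_num)
  have hq : n / 2 ^ d < 2 := (Nat.div_lt_iff_lt_mul pos).mpr (by omega)
  rw [Nat.testBit_eq_decide_div_mod_eq]
  simp only [decide_eq_true_eq]
  rw [Nat.mod_eq_of_lt hq]
  constructor
  · intro h1; exact (Nat.one_le_div_iff pos).mp (by omega)
  · intro hle; have := (Nat.one_le_div_iff pos).mpr hle; omega

/-- Key step: prepending a common bit preserves the unique-cover property. -/
lemma cons_step (b : Bool) (ei ej : List Bool)
    (H : ∃! w : List Bool,
      (w = ei ∨ ∃ w' : List Bool, (w' ++ [false]) <+: ei ∧ w = w' ++ [true]) ∧ w <+: ej) :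
    ∃! w : List Bool,
      (w = b :: ei ∨ ∃ w' : List Bool, (w' ++ [false]) <+: b :: ei ∧ w = w' ++ [true]) ∧
        w <+: b :: ej := by
  obtain ⟨w0, ⟨hmem, hpre⟩, huniq⟩ := H
  refine ⟨b :: w0, ⟨?_, ?_⟩, ?_⟩
  · rcases hmem with h | ⟨w', hc, hw⟩
    · left; rw [h]
    · right
      refine ⟨b :: w', ?_, by rw [hw]; rfl⟩
      rw [List.cons_append, List.cons_prefix_cons]
      exact ⟨rfl, hc⟩
  · rw [List.cons_prefix_cons]; exact ⟨rfl, hpre⟩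
  · rintro w ⟨hm, hp⟩
    rcases hm with h | ⟨w', hc, hw⟩
    · subst h
      rw [List.cons_prefix_cons] at hp
      have := huniq ei ⟨Or.inl rfl, hp.2⟩
      rw [this]
    · subst hw
      cases w' with
      | nil =>
        simp only [List.nil_append, List.cons_prefix_cons] at hc hp
        rw [← hp.1] at hc
        exact absurd hc.1 (by simp)
      | cons c w'' =>
        simp only [List.cons_append, List.cons_prefix_cons] at hc hp
        obtain ⟨hcb, hc2⟩ := hc
        obtain ⟨_, hp2⟩ := hp
        have := huniq (w'' ++ [true]) ⟨Or.inr ⟨w'', hc2, rfl⟩, hp2⟩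
        rw [hcb, List.cons_append, this]

theorem chk_covers_future (d i j : ℕ) (hij : i ≤ j) (hj : j < 2 ^ d) :
    ∃! w : List Bool, w ∈ coverSet d i ∧ w <+: leafEnc d j := by
  simp only [mem_coverSet]
  induction d generalizing i j with
  | zero =>
    refine ⟨[], ⟨Or.inl ?_, List.nil_prefix⟩, ?_⟩
    · simp [leafEnc]
    · rintro w ⟨_, hp⟩
      simpa [leafEnc] using hp
  | succ d IH =>
    have hi : i < 2 ^ (d + 1) := lt_of_le_of_lt hij hj
    have hbi := testBit_iff_of_lt hi
    have hbj := testBit_iff_of_lt hj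
    have h2 : 2 ^ (d + 1) = 2 ^ d * 2 := by rw [pow_succ]
    rw [leafEnc_succ, leafEnc_succ]
    cases hbit : i.testBit d with
    | false =>
      have hilt : i < 2 ^ d := by
        by_contra h
        rw [hbit] at hbi
        simp at hbi
        omega
      cases hbjt : j.testBit d with
      | false =>
        have hjlt : j < 2 ^ d := by
          by_contra h
          rw [hbjt] at hbj
          simp at hbj
          omega
        exact cons_step false _ _ (IH i j hij hjlt)
      | true =>
        -- i's top bit is 0, j's is 1 : the unique cover node is [true]
        refine ⟨[true], ⟨Or.inr ⟨[], ?_, rfl⟩, ?_⟩, ?_⟩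
        · simp [List.cons_prefix_cons]
        · simp [List.cons_prefix_cons]
        · rintro w ⟨hm, hp⟩
          rcases hm with h | ⟨w', hc, hw⟩
          · subst h
            rw [List.cons_prefix_cons] at hp
            exact absurd hp.1 (by simp)
          · subst hw
            cases w' with
            | nil => rfl
            | cons c w'' =>
              simp only [List.cons_append, List.cons_prefix_cons] at hc hp
              rw [hc.1] at hp
              exact absurd hp.1 (by simp)
    | true =>
      have hige : 2 ^ d ≤ i := hbi.mp hbit
      have hjge : 2 ^ d ≤ j := le_trans hige hij
      have hbjt : j.testBit d = true := hbj.mpr hjge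
      rw [hbjt]
      have hmi : i % 2 ^ d = i - 2 ^ d := by
        rw [Nat.mod_eq_sub_mod hige, Nat.mod_eq_of_lt (by omega)]
      have hmj : j % 2 ^ d = j - 2 ^ d := by
        rw [Nat.mod_eq_sub_mod hjge, Nat.mod_eq_of_lt (by omega)]
      have hei : leafEnc d i = leafEnc d (i - 2 ^ d) := by
        rw [← hmi, leafEnc_eq_of_mod]
      have hej : leafEnc d j = leafEnc d (j - 2 ^ d) := by
        rw [← hmj, leafEnc_eq_of_mod]
      rw [hei, hej]
      exact cons_step true _ _ (IH (i - 2 ^ d) (j - 2 ^ d) (by omega) (by omega))
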